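/- Let φ be strictly convex and differentiable on a convex set X ⊆ R^d with Bregman divergence D_φ. For any finite family of points x_1,...,x_m in X whose arithmetic mean x̄ lies in the interior of X, the function μ ↦ ∑_{i=1}^m D_φ(x_i; μ) is uniquely minimized over the interior of X at μ = x̄. -/

import Mathlib

open Finset

/-- Strict gradient inequality for a strictly convex function: the function lies strictly
above its tangent plane. -/
lemma bregman_grad_lt {E : Type*} [NormedAddCommGroup E] [InnerProductSpace ℝ E]
    [CompleteSpace E] {X : Set E} {φ : E → ℝ} (hφ : StrictConvexOn ℝ X φ) {μ b g : E}
    (hμ : μ ∈ X) (hb : b ∈ X) (hne : b ≠ μ) (hg : HasGradientAt φ g μ) :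
    φ μ + inner ℝ (b - μ) g < φ b := by
  set A : ℝ →ᵃ[ℝ] E := AffineMap.lineMap μ b with hA
  set f : ℝ → ℝ := fun t => φ (A t) with hf
  have hconv : ConvexOn ℝ (A ⁻¹' X) f := hφ.convexOn.comp_affineMap A
  have hA0 : A 0 = μ := by simp [hA]
  have hA1 : A 1 = b := by simp [hA]
  have hAhalf : A (1/2 : ℝ) = (1/2 : ℝ) • μ + (1/2 : ℝ) • b := by
    simp only [hA, AffineMap.lineMap_apply_module]
    module
  have h0 : (0:ℝ) ∈ A ⁻¹' X := by simp [Set.mem_preimage, hA0, hμ]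
  have hhalf : (1/2 : ℝ) ∈ A ⁻¹' X := by
    simp only [Set.mem_preimage, hAhalf]
    exact hφ.1 hμ hb (by norm_num) (by norm_num) (by norm_num)
  have hline : HasDerivAt (fun t : ℝ => A t) (b - μ) 0 := by
    have h1 : HasDerivAt (fun t : ℝ => t • (b - μ) + μ) ((1:ℝ) • (b - μ)) 0 :=
      ((hasDerivAt_id (0:ℝ)).smul_const (b - μ)).add_const μ
    rw [one_smul] at h1
    have hAe : ∀ t : ℝ, A t = t • (b - μ) + μ := fun t => by
      rw [hA, AffineMap.lineMap_apply_module']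
    simp only [hAe]
    exact h1
  have hderiv : HasDerivAt f (inner ℝ g (b - μ) : ℝ) 0 := by
    have h2 := HasFDerivAt.comp_hasDerivAt 0 (hA0 ▸ hg.hasFDerivAt) hline
    simpa [Function.comp_def, InnerProductSpace.toDual_apply_apply, hf] using h2
  have hslope : (inner ℝ g (b - μ) : ℝ) ≤ slope f 0 (1/2) :=
    hconv.le_slope_of_hasDerivAt h0 hhalf (by norm_num) hderiv
  have hs2 : slope f 0 (1/2) = 2 * (f (1/2) - f 0) := by
    rw [slope_def_field]; ring
  have hf0 : f 0 = φ μ := congrArg φ hA0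
  have hf1 : f 1 = φ b := congrArg φ hA1
  have hfh : f (1/2) = φ ((1/2 : ℝ) • μ + (1/2 : ℝ) • b) := congrArg φ hAhalf
  have hstrict : f (1/2) < (1/2) * f 0 + (1/2) * f 1 := by
    have h3 := hφ.2 hμ hb hne.symm (by norm_num : (0:ℝ) < 1/2)
      (by norm_num : (0:ℝ) < 1/2) (by norm_num)
    rw [hfh, hf0, hf1]
    exact h3
  have hcomm : (inner ℝ (b - μ) g : ℝ) = inner ℝ g (b - μ) := real_inner_comm _ _
  rw [hcomm]
  rw [hs2] at hslope
  rw [hf0, hf1] at hstrict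
  rw [hf0] at hslope
  linarith

/-- The arithmetic mean uniquely minimizes the total Bregman divergence
`μ ↦ ∑ i, D_φ(x i; μ)` over the interior of `X`. -/
theorem bregman_mean_minimizer (d m : ℕ) (hm : 0 < m)
    (X : Set (EuclideanSpace ℝ (Fin d))) (hX : Convex ℝ X)
    (φ : EuclideanSpace ℝ (Fin d) → ℝ) (hφ : StrictConvexOn ℝ X φ)
    (gradφ : EuclideanSpace ℝ (Fin d) → EuclideanSpace ℝ (Fin d))
    (hgrad : ∀ μ ∈ interior X, HasGradientAt φ (gradφ μ) μ)
    (D : EuclideanSpace ℝ (Fin d) → EuclideanSpace ℝ (Fin d) → ℝ)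
    (hD : ∀ x μ, D x μ = φ x - φ μ - inner ℝ (x - μ) (gradφ μ))
    (x : Fin m → EuclideanSpace ℝ (Fin d)) (hx : ∀ i, x i ∈ X)
    (xbar : EuclideanSpace ℝ (Fin d))
    (hxbar : xbar = (m : ℝ)⁻¹ • ∑ i, x i)
    (hmean : xbar ∈ interior X) :
    ∀ μ ∈ interior X, μ ≠ xbar →
      ∑ i, D (x i) xbar < ∑ i, D (x i) μ := by
  intro μ hμ hneq
  have hm0 : (m:ℝ) ≠ 0 := Nat.cast_ne_zero.mpr hm.ne'
  have hsum : ∑ i, x i = (m:ℝ) • xbar := by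
    rw [hxbar, smul_smul, mul_inv_cancel₀ hm0, one_smul]
  have expand : ∀ ν, ∑ i, D (x i) ν =
      (∑ i, φ (x i)) - m * φ ν -
        ((m:ℝ) * inner ℝ xbar (gradφ ν) - (m:ℝ) * inner ℝ ν (gradφ ν)) := by
    intro ν
    have h1 : ∑ i, (inner ℝ (x i) (gradφ ν) : ℝ) = (m:ℝ) * inner ℝ xbar (gradφ ν) := by
      rw [← sum_inner, hsum, real_inner_smul_left]
    simp_rw [hD, inner_sub_left]
    rw [Finset.sum_sub_distrib, Finset.sum_sub_distrib, Finset.sum_sub_distrib, h1,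
      Finset.sum_const, Finset.sum_const, Finset.card_univ, Fintype.card_fin,
      nsmul_eq_mul, nsmul_eq_mul]
  rw [expand xbar, expand μ]
  have key := bregman_grad_lt hφ (interior_subset hμ) (interior_subset hmean)
    hneq.symm (hgrad μ hμ)
  rw [inner_sub_left] at key
  have hmpos : (0:ℝ) < m := Nat.cast_pos.mpr hm
  have hmul := mul_lt_mul_of_pos_left key hmpos
  nlinarith [hmul]
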